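/- Let H be a (finite simple) graph with maximum degree at most 2, and let G be obtained from H by gluing in vertex-disjoint copies of K_4. Let X_1, ..., X_p be the vertex sets of the cycles of H and let T be the set of triangles in H. Then the family (X_1, ..., X_p) has a partial independent set of representatives in G of size at least p − ⌊|T|/4⌋. -/

import Mathlib

open SimpleGraph

/-- `G` is obtained from `H` by gluing in vertex-disjoint copies of `K₄`. -/
def GluedK4 {V : Type} [DecidableEq V] (H G : SimpleGraph V) : Prop :=
  ∃ (q : ℕ) (Y : Fin q → Finset V),
    (∀ j, (Y j).card = 4) ∧
    (∀ i j, i ≠ j → Disjoint (Y i) (Y j)) ∧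
    ∀ u v, G.Adj u v ↔ H.Adj u v ∨ (u ≠ v ∧ ∃ j, u ∈ Y j ∧ v ∈ Y j)

/-- `s` is the vertex set of a cycle subgraph of `H`. -/
def IsCycleSet {V : Type} [DecidableEq V] (H : SimpleGraph V) (s : Finset V) : Prop :=
  ∃ (v : V) (w : H.Walk v v), w.IsCycle ∧ w.support.toFinset = s

namespace StmtAux
open Finset

variable {V : Type} {H : SimpleGraph V}

lemma supp_getElem {u v : V} (p : H.Walk u v) :
    ∀ (i : ℕ) (hi : i < p.support.length), p.support[i] = p.getVert i := by
  induction p with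
  | nil =>
      intro i hi
      simp only [Walk.support_nil, List.length_cons, List.length_nil] at hi
      interval_cases i
      · simp [Walk.getVert]
  | cons h q ih =>
      intro i hi
      cases i with
      | zero => simp [Walk.support_cons]
      | succ n =>
          simp only [Walk.support_cons, List.getElem_cons_succ, Walk.getVert_cons_succ]
          exact ih n (by simpa [Walk.support_cons] using hi)

lemma tail_length {u v : V} (p : H.Walk u v) : p.support.tail.length = p.length := by
  simp [List.length_tail, Walk.length_support]

lemma tail_getElem {u v : V} (p : H.Walk u v) (i : ℕ) (hi : i < p.support.tail.length) :
    p.support.tail[i] = p.getVert (i + 1) := by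
  rw [List.getElem_tail]
  exact supp_getElem p (i + 1) (by rw [tail_length] at hi; rw [Walk.length_support]; omega)

lemma cycle_getVert_inj {v : V} {c : H.Walk v v} (hc : c.IsCycle) {i j : ℕ}
    (h1 : 1 ≤ i) (h2 : i ≤ c.length) (h3 : 1 ≤ j) (h4 : j ≤ c.length)
    (h : c.getVert i = c.getVert j) : i = j := by
  have nd : c.support.tail.Nodup := hc.2
  have hl : c.support.tail.length = c.length := tail_length c
  have e1 : c.support.tail[i - 1]'(by omega) = c.getVert i := by
    rw [tail_getElem]; congr 1; omega
  have e2 : c.support.tail[j - 1]'(by omega) = c.getVert j := by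
    rw [tail_getElem]; congr 1; omega
  have hij : c.support.tail[i - 1]'(by omega) = c.support.tail[j - 1]'(by omega) := by
    rw [e1, e2]; exact h
  have := nd.getElem_inj_iff.mp hij
  omega

lemma cycle_mem_tail {v : V} {c : H.Walk v v} (hc : c.IsCycle) : v ∈ c.support.tail := by
  have h3 := hc.three_le_length
  have hl : c.support.tail.length = c.length := tail_length c
  have : c.support.tail[c.length - 1]'(by omega) = c.getVert c.length := by
    rw [tail_getElem]; congr 1; omega
  rw [Walk.getVert_length] at this
  have hm : c.support.tail[c.length - 1]'(by omega) ∈ c.support.tail := List.getElem_mem _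
  rwa [this] at hm

lemma cycle_mem_support_iff_tail {v u : V} {c : H.Walk v v} (hc : c.IsCycle) :
    u ∈ c.support ↔ u ∈ c.support.tail := by
  constructor
  · intro hu
    rw [Walk.support_eq_cons] at hu
    rcases List.mem_cons.mp hu with rfl | h
    · exact cycle_mem_tail hc
    · exact h
  · exact List.mem_of_mem_tail

lemma cycle_support_card [DecidableEq V] {v : V} {c : H.Walk v v} (hc : c.IsCycle) :
    c.support.toFinset.card = c.length := by
  have : c.support.toFinset = c.support.tail.toFinset := by
    conv_lhs => rw [Walk.support_eq_cons]
    rw [List.toFinset_cons, Finset.insert_eq_self]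
    simpa using cycle_mem_tail hc
  rw [this, List.toFinset_card_of_nodup hc.2, tail_length]

lemma isCycleSet_card [DecidableEq V] {s : Finset V} (hs : IsCycleSet H s) : 3 ≤ s.card := by
  obtain ⟨v, w, hw, hsup⟩ := hs
  rw [← hsup, cycle_support_card hw]
  exact hw.three_le_length

lemma cycle_two_neighbors {v : V} {c : H.Walk v v} (hc : c.IsCycle) :
    ∃ a b : V, a ≠ b ∧ H.Adj v a ∧ H.Adj v b ∧ a ∈ c.support ∧ b ∈ c.support := by
  have h3 := hc.three_le_length
  refine ⟨c.getVert 1, c.getVert (c.length - 1), ?_, ?_, ?_, ?_, ?_⟩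
  · intro h
    have := cycle_getVert_inj hc (by omega) (by omega) (by omega) (by omega) h
    omega
  · have := c.adj_getVert_succ (i := 0) (by omega)
    rwa [Walk.getVert_zero] at this
  · have := c.adj_getVert_succ (i := c.length - 1) (by omega)
    rw [show c.length - 1 + 1 = c.length by omega, Walk.getVert_length] at this
    exact this.symm
  · exact Walk.mem_support_iff_exists_getVert.mpr ⟨1, rfl, by omega⟩
  · exact Walk.mem_support_iff_exists_getVert.mpr ⟨c.length - 1, rfl, by omega⟩

lemma cycle_closed [Fintype V] [DecidableEq V] [DecidableRel H.Adj]
    (hΔ : ∀ v, H.degree v ≤ 2) {s : Finset V} (hs : IsCycleSet H s) :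
    ∀ v ∈ s, ∀ u, H.Adj v u → u ∈ s := by
  obtain ⟨x, w, hw, hsup⟩ := hs
  intro v hv u hadj
  have hv' : v ∈ w.support := by rw [← hsup] at hv; simpa using hv
  have hc : (w.rotate v hv').IsCycle := hw.rotate hv'
  have hsub : ∀ y, y ∈ (w.rotate v hv').support → y ∈ s := by
    intro y hy
    rcases (cycle_mem_support_iff_tail hc).mp hy with h
    have : y ∈ w.support.tail := (Walk.support_rotate w v hv').mem_iff.mp h
    have : y ∈ w.support := List.mem_of_mem_tail this
    rw [← hsup]; simpa using this
  obtain ⟨a, b, hab, ha, hb, hamem, hbmem⟩ := cycle_two_neighbors hc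
  have hsubn : {a, b} ⊆ H.neighborFinset v := by
    intro z hz
    rcases Finset.mem_insert.mp hz with rfl | hz
    · exact (H.mem_neighborFinset v z).mpr ha
    · rw [Finset.mem_singleton] at hz; subst hz
      exact (H.mem_neighborFinset v z).mpr hb
  have hcard : (H.neighborFinset v).card ≤ ({a, b} : Finset V).card := by
    rw [Finset.card_insert_of_notMem (by simpa using hab), Finset.card_singleton]
    exact hΔ v
  have heq : ({a, b} : Finset V) = H.neighborFinset v :=
    Finset.eq_of_subset_of_card_le hsubn hcard
  have : u ∈ ({a, b} : Finset V) := by rw [heq]; exact (H.mem_neighborFinset v u).mpr hadj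
  rcases Finset.mem_insert.mp this with rfl | h
  · exact hsub _ hamem
  · rw [Finset.mem_singleton] at h; subst h; exact hsub _ hbmem

lemma cycle_reach [Fintype V] [DecidableEq V] [DecidableRel H.Adj]
    (hΔ : ∀ v, H.degree v ≤ 2) {s : Finset V} (hs : IsCycleSet H s) {v : V} (hv : v ∈ s)
    (u : V) : u ∈ s ↔ H.Reachable v u := by
  constructor
  · intro hu
    obtain ⟨x, w, hw, hsup⟩ := hs
    have hv' : v ∈ w.support := by rw [← hsup] at hv; simpa using hv
    have hu' : u ∈ w.support := by rw [← hsup] at hu; simpa using hu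
    have hu'' : u ∈ (w.rotate v hv').support := by
      rw [cycle_mem_support_iff_tail (hw.rotate hv'),
        (Walk.support_rotate w v hv').mem_iff]
      exact (cycle_mem_support_iff_tail hw).mp hu'
    exact ⟨(w.rotate v hv').takeUntil u hu''⟩
  · intro h
    obtain ⟨p⟩ := h
    induction p with
    | nil => exact hv
    | cons hadj q ih => exact ih (cycle_closed hΔ hs _ hv _ hadj)

lemma cycleSet_eq_of_mem [Fintype V] [DecidableEq V] [DecidableRel H.Adj]
    (hΔ : ∀ v, H.degree v ≤ 2) {s t : Finset V} (hs : IsCycleSet H s) (ht : IsCycleSet H t)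
    {x : V} (hx : x ∈ s) (hx' : x ∈ t) : s = t := by
  ext u
  rw [cycle_reach hΔ hs hx u, cycle_reach hΔ ht hx' u]

end StmtAux

open StmtAux

theorem stmt_11 {V : Type} [Fintype V] [DecidableEq V]
    (H G : SimpleGraph V) [DecidableRel H.Adj]
    (hΔ : ∀ v, H.degree v ≤ 2)
    (hglue : GluedK4 H G) :
    -- the family of vertex sets of cycles of H has a partial ISR in G of size
    -- at least p − ⌊|𝒯|/4⌋
    ∃ (R : Finset V) (𝒮 : Set (Finset V)),
      𝒮 ⊆ {s : Finset V | IsCycleSet H s} ∧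
      {s : Finset V | IsCycleSet H s}.ncard
          - {s : Finset V | IsCycleSet H s ∧ s.card = 3}.ncard / 4 ≤ 𝒮.ncard ∧
      (∀ u ∈ R, ∀ v ∈ R, ¬ G.Adj u v) ∧
      (∀ s ∈ 𝒮, (R ∩ s).card = 1) ∧
      (↑R : Set V) ⊆ ⋃ s ∈ 𝒮, (↑s : Set V) := by
  classical
  obtain ⟨q, Y, hY4, hYdisj, hGadj⟩ := hglue
  set 𝒞 : Finset (Finset V) := Finset.univ.filter (fun s => IsCycleSet H s) with h𝒞
  have h𝒞mem : ∀ {s : Finset V}, s ∈ 𝒞 ↔ IsCycleSet H s := by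
    intro s; simp [h𝒞]
  set t : ℕ := (𝒞.filter (fun s => s.card = 3)).card with ht
  set d : ℕ := t / 4 with hd
  -- the index type and neighborhood finsets for Hall's theorem
  set NJ : {s : Finset V // s ∈ 𝒞} → Finset (Fin q) :=
    (fun s => Finset.univ.filter (fun j => ((Y j) ∩ s.1).Nonempty)) with hNJ
  set NF : {s : Finset V // s ∈ 𝒞} → Finset V :=
    (fun s => s.1.filter (fun v => ∀ j, v ∉ Y j)) with hNF
  set N : {s : Finset V // s ∈ 𝒞} → Finset (Fin q ⊕ (V ⊕ Fin d)) :=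
    (fun s => (NJ s).image Sum.inl ∪ (NF s).image (fun v => Sum.inr (Sum.inl v)) ∪
      (Finset.univ : Finset (Fin d)).image (fun k => Sum.inr (Sum.inr k))) with hN
  have hdisj' : ∀ a b : {s : Finset V // s ∈ 𝒞}, a ≠ b → Disjoint a.1 b.1 := by
    intro a b hne
    rw [Finset.disjoint_left]
    intro x hx hx'
    exact hne (Subtype.ext (cycleSet_eq_of_mem hΔ (h𝒞mem.mp a.2) (h𝒞mem.mp b.2) hx hx'))
  have hne3 : ∀ a : {s : Finset V // s ∈ 𝒞}, 3 ≤ a.1.card :=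
    fun a => isCycleSet_card (h𝒞mem.mp a.2)
  -- Hall's condition
  have hall : ∀ S : Finset {s : Finset V // s ∈ 𝒞}, S.card ≤ (S.biUnion N).card := by
    intro S
    rcases S.eq_empty_or_nonempty with rfl | hS
    · simp
    have hsub : ((S.biUnion NJ).image Sum.inl ∪
        (S.biUnion NF).image (fun v => Sum.inr (Sum.inl v)) ∪
        (Finset.univ : Finset (Fin d)).image (fun k => Sum.inr (Sum.inr k)))
        ⊆ S.biUnion N := by
      intro x hx
      rcases Finset.mem_union.mp hx with hx | hx
      · rcases Finset.mem_union.mp hx with hx | hx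
        · obtain ⟨j, hj, rfl⟩ := Finset.mem_image.mp hx
          obtain ⟨s, hsS, hjs⟩ := Finset.mem_biUnion.mp hj
          exact Finset.mem_biUnion.mpr ⟨s, hsS,
            Finset.mem_union.mpr (Or.inl (Finset.mem_union.mpr (Or.inl
              (Finset.mem_image_of_mem _ hjs))))⟩
        · obtain ⟨v, hv, rfl⟩ := Finset.mem_image.mp hx
          obtain ⟨s, hsS, hvs⟩ := Finset.mem_biUnion.mp hv
          exact Finset.mem_biUnion.mpr ⟨s, hsS,
            Finset.mem_union.mpr (Or.inl (Finset.mem_union.mpr (Or.inr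
              (Finset.mem_image_of_mem _ hvs))))⟩
      · obtain ⟨s, hsS⟩ := hS
        exact Finset.mem_biUnion.mpr ⟨s, hsS, Finset.mem_union.mpr (Or.inr hx)⟩
    have hdAB : Disjoint ((S.biUnion NJ).image (Sum.inl : Fin q → Fin q ⊕ (V ⊕ Fin d)))
        ((S.biUnion NF).image (fun v => Sum.inr (Sum.inl v))) := by
      rw [Finset.disjoint_left]
      rintro x hx hx'
      obtain ⟨j, _, rfl⟩ := Finset.mem_image.mp hx
      obtain ⟨v, _, h⟩ := Finset.mem_image.mp hx'
      simp at h
    have hdABC : Disjoint ((S.biUnion NJ).image (Sum.inl : Fin q → Fin q ⊕ (V ⊕ Fin d)) ∪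
        (S.biUnion NF).image (fun v => Sum.inr (Sum.inl v)))
        ((Finset.univ : Finset (Fin d)).image (fun k => Sum.inr (Sum.inr k))) := by
      rw [Finset.disjoint_left]
      rintro x hx hx'
      obtain ⟨k, _, rfl⟩ := Finset.mem_image.mp hx'
      rcases Finset.mem_union.mp hx with hx | hx
      · obtain ⟨j, _, h⟩ := Finset.mem_image.mp hx
        simp at h
      · obtain ⟨v, _, h⟩ := Finset.mem_image.mp hx
        simp at h
    have hcards : ((S.biUnion NJ).image Sum.inl ∪
        (S.biUnion NF).image (fun v => Sum.inr (Sum.inl v)) ∪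
        (Finset.univ : Finset (Fin d)).image (fun k => Sum.inr (Sum.inr k))).card
        = (S.biUnion NJ).card + (S.biUnion NF).card + d := by
      have hinj1 : Function.Injective (fun v : V => (Sum.inr (Sum.inl v) : Fin q ⊕ (V ⊕ Fin d))) :=
        fun a b hab => by simpa using hab
      have hinj2 : Function.Injective (fun k : Fin d => (Sum.inr (Sum.inr k) : Fin q ⊕ (V ⊕ Fin d))) :=
        fun a b hab => by simpa using hab
      rw [Finset.card_union_of_disjoint hdABC, Finset.card_union_of_disjoint hdAB,
        Finset.card_image_of_injective _ Sum.inl_injective,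
        Finset.card_image_of_injective _ hinj1,
        Finset.card_image_of_injective _ hinj2,
        Finset.card_univ, Fintype.card_fin]
    have key : S.card ≤ (S.biUnion NJ).card + (S.biUnion NF).card + d := by
      set Sc := S.filter (fun s => ∀ v ∈ s.1, ∃ j, v ∈ Y j) with hSc
      set Sf := S.filter (fun s => ¬ ∀ v ∈ s.1, ∃ j, v ∈ Y j) with hSf
      have hsplit : Sc.card + Sf.card = S.card :=
        Finset.card_filter_add_card_filter_not _
      -- free part
      have hSfcard : Sf.card ≤ (S.biUnion NF).card := by
        have h1 : Sf.card ≤ (Sf.biUnion NF).card := by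
          apply Finset.card_le_card_biUnion
          · intro a _ b _ hne
            exact (hdisj' a b hne).mono (Finset.filter_subset _ _) (Finset.filter_subset _ _)
          · intro s hs
            have := (Finset.mem_filter.mp hs).2
            push_neg at this
            obtain ⟨v, hv, hfree⟩ := this
            exact ⟨v, Finset.mem_filter.mpr ⟨hv, hfree⟩⟩
        exact h1.trans (Finset.card_le_card
          (Finset.biUnion_subset_biUnion_of_subset_left _ (Finset.filter_subset _ _)))
      -- colored part
      have hSccard : Sc.card ≤ (S.biUnion NJ).card + d := by
        set U := Sc.biUnion (fun s : {s : Finset V // s ∈ 𝒞} => s.1) with hU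
        have hU1 : U.card = ∑ s ∈ Sc, s.1.card :=
          Finset.card_biUnion (fun a _ b _ hne => hdisj' a b hne)
        set tS := (Sc.filter (fun s => s.1.card = 3)).card with htS
        have hsum : 4 * Sc.card ≤ (∑ s ∈ Sc, s.1.card) + tS := by
          rw [← Finset.sum_filter_add_sum_filter_not Sc (fun s => s.1.card = 3)]
          have h3 : 3 * tS ≤ ∑ s ∈ Sc.filter (fun s => s.1.card = 3), s.1.card := by
            rw [mul_comm]
            simpa using Finset.card_nsmul_le_sum
              (Sc.filter (fun s => s.1.card = 3)) (fun s => s.1.card) 3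
              (fun x hx => le_of_eq (Finset.mem_filter.mp hx).2.symm)
          have h4 : 4 * (Sc.filter (fun s => ¬ s.1.card = 3)).card ≤
              ∑ s ∈ Sc.filter (fun s => ¬ s.1.card = 3), s.1.card := by
            rw [mul_comm]
            simpa using Finset.card_nsmul_le_sum
              (Sc.filter (fun s => ¬ s.1.card = 3)) (fun s => s.1.card) 4
              (fun x hx => by
                have h1 := hne3 x
                have h2 := (Finset.mem_filter.mp hx).2
                show 4 ≤ x.1.card
                omega)
          have hc : tS + (Sc.filter (fun s => ¬ s.1.card = 3)).card = Sc.card :=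
            Finset.card_filter_add_card_filter_not _
          omega
        have htSt : tS ≤ t := by
          have himg : (Sc.filter (fun s => s.1.card = 3)).image
              (fun s : {s : Finset V // s ∈ 𝒞} => s.1) ⊆ 𝒞.filter (fun s => s.card = 3) := by
            intro x hx
            obtain ⟨a, ha, rfl⟩ := Finset.mem_image.mp hx
            exact Finset.mem_filter.mpr ⟨a.2, (Finset.mem_filter.mp ha).2⟩
          calc tS = ((Sc.filter (fun s => s.1.card = 3)).image
                (fun s : {s : Finset V // s ∈ 𝒞} => s.1)).card :=
              (Finset.card_image_of_injective _ Subtype.val_injective).symm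
            _ ≤ t := Finset.card_le_card himg
        have hU3 : U.card ≤ 4 * (S.biUnion NJ).card := by
          have hUsub : U ⊆ (S.biUnion NJ).biUnion (fun j => Y j) := by
            intro v hv
            obtain ⟨s, hsSc, hvs⟩ := Finset.mem_biUnion.mp hv
            obtain ⟨j, hj⟩ := (Finset.mem_filter.mp hsSc).2 v hvs
            refine Finset.mem_biUnion.mpr ⟨j, ?_, hj⟩
            refine Finset.mem_biUnion.mpr ⟨s, (Finset.mem_filter.mp hsSc).1, ?_⟩
            rw [hNJ]
            exact Finset.mem_filter.mpr ⟨Finset.mem_univ _,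
              ⟨v, Finset.mem_inter.mpr ⟨hj, hvs⟩⟩⟩
          calc U.card ≤ ((S.biUnion NJ).biUnion (fun j => Y j)).card :=
              Finset.card_le_card hUsub
            _ ≤ ∑ j ∈ S.biUnion NJ, (Y j).card := Finset.card_biUnion_le
            _ = 4 * (S.biUnion NJ).card := by
                rw [Finset.sum_congr rfl (fun j _ => hY4 j), Finset.sum_const,
                  smul_eq_mul, mul_comm]
        omega
      omega
    calc S.card ≤ (S.biUnion NJ).card + (S.biUnion NF).card + d := key
      _ = _ := hcards.symm
      _ ≤ (S.biUnion N).card := Finset.card_le_card hsub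
  obtain ⟨f, finj, hfN⟩ := (Finset.all_card_le_biUnion_card_iff_exists_injective N).mp hall
  set good : {s : Finset V // s ∈ 𝒞} → Prop :=
    (fun s => ¬ ∃ k : Fin d, f s = Sum.inr (Sum.inr k)) with hgood
  have hok : ∀ s : {s : Finset V // s ∈ 𝒞}, good s → ∃ v, v ∈ s.1 ∧
      ((∃ j, f s = Sum.inl j ∧ v ∈ Y j) ∨ ((∀ j, v ∉ Y j) ∧ f s = Sum.inr (Sum.inl v))) := by
    intro s hg
    have h := hfN s
    rw [hN] at h
    rcases Finset.mem_union.mp h with h | h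
    · rcases Finset.mem_union.mp h with h | h
      · obtain ⟨j, hj, hfe⟩ := Finset.mem_image.mp h
        rw [hNJ] at hj
        obtain ⟨v, hv⟩ := (Finset.mem_filter.mp hj).2
        exact ⟨v, (Finset.mem_inter.mp hv).2,
          Or.inl ⟨j, hfe.symm, (Finset.mem_inter.mp hv).1⟩⟩
      · obtain ⟨v, hv, hfe⟩ := Finset.mem_image.mp h
        rw [hNF] at hv
        exact ⟨v, (Finset.mem_filter.mp hv).1,
          Or.inr ⟨(Finset.mem_filter.mp hv).2, hfe.symm⟩⟩
    · obtain ⟨k, _, hfe⟩ := Finset.mem_image.mp h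
      exact absurd ⟨k, hfe.symm⟩ hg
  have hrepex : ∀ s : {s : Finset V // s ∈ 𝒞}, ∃ v : V, good s → (v ∈ s.1 ∧
      ((∃ j, f s = Sum.inl j ∧ v ∈ Y j) ∨ ((∀ j, v ∉ Y j) ∧ f s = Sum.inr (Sum.inl v)))) := by
    intro s
    by_cases h : good s
    · obtain ⟨v, hv⟩ := hok s h
      exact ⟨v, fun _ => hv⟩
    · have hne : s.1.Nonempty := Finset.card_pos.mp (by have := hne3 s; omega)
      exact ⟨hne.choose, fun hg => (h hg).elim⟩
  choose rep hrep using hrepex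
  set Gd : Finset {s : Finset V // s ∈ 𝒞} := 𝒞.attach.filter good with hGd
  set R : Finset V := Gd.image rep with hR
  set 𝒮fin : Finset (Finset V) := Gd.image (fun s => s.1) with h𝒮fin
  have hGdmem : ∀ {a : {s : Finset V // s ∈ 𝒞}}, a ∈ Gd ↔ good a := by
    intro a; rw [hGd, Finset.mem_filter]
    exact ⟨fun h => h.2, fun h => ⟨Finset.mem_attach _ _, h⟩⟩
  refine ⟨R, ↑𝒮fin, ?_, ?_, ?_, ?_, ?_⟩
  · -- 𝒮 consists of cycle sets
    intro x hx
    obtain ⟨a, _, rfl⟩ := Finset.mem_image.mp (Finset.mem_coe.mp hx)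
    exact h𝒞mem.mp a.2
  · -- cardinality bound
    have e1 : {s : Finset V | IsCycleSet H s} = (↑𝒞 : Set (Finset V)) := by
      ext s; simp only [Set.mem_setOf_eq, Finset.mem_coe]; exact h𝒞mem.symm
    have e2 : {s : Finset V | IsCycleSet H s ∧ s.card = 3} =
        (↑(𝒞.filter (fun s => s.card = 3)) : Set (Finset V)) := by
      ext s
      simp only [Set.mem_setOf_eq, Finset.mem_coe, Finset.mem_filter]
      exact and_congr_left (fun _ => h𝒞mem.symm)
    rw [e1, e2, Set.ncard_coe_finset, Set.ncard_coe_finset, Set.ncard_coe_finset]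
    have hbad : (𝒞.attach.filter (fun s => ¬ good s)).card ≤ d := by
      have : (𝒞.attach.filter (fun s => ¬ good s)).card ≤
          ((Finset.univ : Finset (Fin d)).image
            (fun k => (Sum.inr (Sum.inr k) : Fin q ⊕ (V ⊕ Fin d)))).card := by
        apply Finset.card_le_card_of_injOn f
        · intro a ha
          have := (Finset.mem_filter.mp ha).2
          rw [hgood, not_not] at this
          obtain ⟨k, hk⟩ := this
          exact Finset.mem_image.mpr ⟨k, Finset.mem_univ _, hk.symm⟩
        · exact finj.injOn
      calc (𝒞.attach.filter (fun s => ¬ good s)).card ≤ _ := this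
        _ ≤ (Finset.univ : Finset (Fin d)).card := Finset.card_image_le
        _ = d := by rw [Finset.card_univ, Fintype.card_fin]
    have hGdcard : Gd.card + (𝒞.attach.filter (fun s => ¬ good s)).card = 𝒞.card := by
      rw [hGd]
      rw [Finset.card_filter_add_card_filter_not]
      exact Finset.card_attach
    have h𝒮card : 𝒮fin.card = Gd.card := by
      rw [h𝒮fin]
      exact Finset.card_image_of_injective _ Subtype.val_injective
    omega
  · -- independence
    intro u hu v hv hadj
    obtain ⟨a, haGd, rfl⟩ := Finset.mem_image.mp hu
    obtain ⟨b, hbGd, rfl⟩ := Finset.mem_image.mp hv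
    have hga : good a := hGdmem.mp haGd
    have hgb : good b := hGdmem.mp hbGd
    have hra := hrep a hga
    have hrb := hrep b hgb
    by_cases hab : a = b
    · subst hab
      exact G.irrefl hadj
    · have hne : a.1 ≠ b.1 := fun h => hab (Subtype.ext h)
      rcases (hGadj _ _).mp hadj with hH | ⟨_, j, hj1, hj2⟩
      · have : rep b ∈ a.1 := cycle_closed hΔ (h𝒞mem.mp a.2) _ hra.1 _ hH
        exact hne (cycleSet_eq_of_mem hΔ (h𝒞mem.mp a.2) (h𝒞mem.mp b.2) this hrb.1)
      · have hfa : f a = Sum.inl j := by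
          rcases hra.2 with ⟨j', hfj', hYj'⟩ | ⟨hfree, _⟩
          · have hjj : j' = j := by
              by_contra hne''
              exact (Finset.disjoint_left.mp (hYdisj _ _ hne'') hYj') hj1
            rw [← hjj]; exact hfj'
          · exact absurd hj1 (hfree j)
        have hfb : f b = Sum.inl j := by
          rcases hrb.2 with ⟨j', hfj', hYj'⟩ | ⟨hfree, _⟩
          · have hjj : j' = j := by
              by_contra hne''
              exact (Finset.disjoint_left.mp (hYdisj _ _ hne'') hYj') hj2
            rw [← hjj]; exact hfj'
          · exact absurd hj2 (hfree j)
        exact hab (finj (hfa.trans hfb.symm))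
  · -- each chosen set meets R in exactly one vertex
    intro s hs
    obtain ⟨a, haGd, rfl⟩ := Finset.mem_image.mp (Finset.mem_coe.mp hs)
    have hga : good a := hGdmem.mp haGd
    have hkey : R ∩ a.1 = {rep a} := by
      ext u
      simp only [Finset.mem_inter, Finset.mem_singleton]
      constructor
      · rintro ⟨huR, hus⟩
        obtain ⟨b, hbGd, rfl⟩ := Finset.mem_image.mp huR
        have hgb : good b := hGdmem.mp hbGd
        have hrb := hrep b hgb
        have hba : b.1 = a.1 :=
          cycleSet_eq_of_mem hΔ (h𝒞mem.mp b.2) (h𝒞mem.mp a.2) hrb.1 hus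
        rw [Subtype.ext hba]
      · rintro rfl
        exact ⟨Finset.mem_image_of_mem rep haGd, (hrep a hga).1⟩
    rw [hkey, Finset.card_singleton]
  · -- R is covered by the chosen sets
    intro u hu
    obtain ⟨a, haGd, rfl⟩ := Finset.mem_image.mp (Finset.mem_coe.mp hu)
    have hga : good a := hGdmem.mp haGd
    refine Set.mem_iUnion₂.mpr ⟨a.1, ?_, ?_⟩
    · exact Finset.mem_coe.mpr (Finset.mem_image_of_mem _ haGd)
    · exact Finset.mem_coe.mpr (hrep a hga).1
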